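/- Let (X,d) be a nonempty proper (Heine–Borel) metric space, let x₀ ∈ X, and let (Sₙ)ₙ be a sequence of nonempty closed subsets of X such that the sequence of distances (infDist(x₀, Sₙ))ₙ is bounded. Then there exist a strictly increasing map n : ℕ → ℕ and a nonempty closed subset S ⊆ X such that for every y ∈ X, infDist(y, S_{n(k)}) → infDist(y, S) as k → ∞. -/

import Mathlib

open Metric Filter Topology

/-- paper's Lemma A.1, generalizing Dümbgen–Samworth–Schuhmacher
Lemma 4.3. In a nonempty proper (Heine–Borel) metric space, from any sequence of
nonempty closed sets with bounded distance to a fixed point one can extract a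
subsequence whose distance functions converge pointwise to the distance function of a
nonempty closed set. -/
theorem stmt0 {X : Type*} [MetricSpace X] [ProperSpace X] [Nonempty X]
    (x₀ : X) (S : ℕ → Set X)
    (hne : ∀ n, (S n).Nonempty) (hcl : ∀ n, IsClosed (S n))
    (hbd : ∃ C : ℝ, ∀ n, Metric.infDist x₀ (S n) ≤ C) :
    ∃ n : ℕ → ℕ, StrictMono n ∧ ∃ S' : Set X, S'.Nonempty ∧ IsClosed S' ∧
      ∀ y : X, Filter.Tendsto (fun k => Metric.infDist y (S (n k)))
        Filter.atTop (nhds (Metric.infDist y S')) := by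
  obtain ⟨C, hC⟩ := hbd
  set D : ℕ → X := TopologicalSpace.denseSeq X with hDdef
  have hD : DenseRange D := TopologicalSpace.denseRange_denseSeq X
  -- 1-Lipschitz property of infDist in the point
  have hlip : ∀ (s : Set X) (y z : X),
      dist (infDist y s) (infDist z s) ≤ dist y z := by
    intro s y z
    simpa using (lipschitz_infDist_pt s).dist_le_mul y z
  -- coordinates are in a compact box
  have hb : ∀ n i, infDist (D i) (S n) ∈ Set.Icc (0:ℝ) (dist (D i) x₀ + C) := by
    intro n i
    refine ⟨infDist_nonneg, ?_⟩
    calc infDist (D i) (S n) ≤ infDist x₀ (S n) + dist (D i) x₀ :=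
          infDist_le_infDist_add_dist
      _ ≤ dist (D i) x₀ + C := by linarith [hC n]
  have hK : IsCompact (Set.univ.pi fun i => Set.Icc (0:ℝ) (dist (D i) x₀ + C)) :=
    isCompact_univ_pi fun i => isCompact_Icc
  obtain ⟨L, -, φ, hφ, hconv⟩ :=
    hK.isSeqCompact (x := fun n i => infDist (D i) (S n))
      (fun n => by intro i _; exact hb n i)
  have hptD : ∀ i, Tendsto (fun k => infDist (D i) (S (φ k))) atTop (𝓝 (L i)) := by
    intro i
    have := tendsto_pi_nhds.1 hconv i
    exact this
  -- convergence at every point, via Cauchy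
  have hcauchy : ∀ y : X, CauchySeq (fun k => infDist y (S (φ k))) := by
    intro y
    rw [Metric.cauchySeq_iff]
    intro ε hε
    obtain ⟨i, hi⟩ := Metric.denseRange_iff.1 hD y (ε/4) (by linarith)
    have hbC : CauchySeq (fun k => infDist (D i) (S (φ k))) := (hptD i).cauchySeq
    rw [Metric.cauchySeq_iff] at hbC
    obtain ⟨N, hN⟩ := hbC (ε/4) (by linarith)
    refine ⟨N, fun m hm n hn => ?_⟩
    have h1 := hlip (S (φ m)) y (D i)
    have h2 := hN m hm n hn
    have h3 := hlip (S (φ n)) (D i) y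
    calc dist (infDist y (S (φ m))) (infDist y (S (φ n)))
        ≤ dist (infDist y (S (φ m))) (infDist (D i) (S (φ m)))
          + dist (infDist (D i) (S (φ m))) (infDist y (S (φ n))) := dist_triangle _ _ _
      _ ≤ dist (infDist y (S (φ m))) (infDist (D i) (S (φ m)))
          + (dist (infDist (D i) (S (φ m))) (infDist (D i) (S (φ n)))
            + dist (infDist (D i) (S (φ n))) (infDist y (S (φ n)))) := by
            linarith [dist_triangle (infDist (D i) (S (φ m)))
              (infDist (D i) (S (φ n))) (infDist y (S (φ n)))]
      _ < ε := by
            have : dist (infDist (D i) (S (φ n))) (infDist y (S (φ n)))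
                = dist (infDist y (S (φ n))) (infDist (D i) (S (φ n))) := dist_comm _ _
            rw [this]
            linarith [h1, h2, hlip (S (φ n)) y (D i), hi]
  have hex : ∀ y : X, ∃ l : ℝ, Tendsto (fun k => infDist y (S (φ k))) atTop (𝓝 l) :=
    fun y => cauchySeq_tendsto_of_complete (hcauchy y)
  choose f hf using hex
  -- basic properties of f
  have hf0 : ∀ y, 0 ≤ f y :=
    fun y => ge_of_tendsto' (hf y) (fun k => infDist_nonneg)
  have hfle : ∀ y z, f y ≤ f z + dist y z := by
    intro y z
    refine le_of_tendsto_of_tendsto' (hf y)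
      (Tendsto.add_const (dist y z) (hf z)) (fun k => ?_)
    exact infDist_le_infDist_add_dist
  have hfcont : Continuous f := by
    apply LipschitzWith.continuous (K := 1)
    intro y z
    rw [edist_dist, edist_dist]
    have h1 := hfle y z
    have h2 := hfle z y
    rw [Real.dist_eq]
    have : |f y - f z| ≤ dist y z := by
      rw [abs_le]; constructor <;> [linarith [dist_comm y z]; linarith]
    calc ENNReal.ofReal |f y - f z| ≤ ENNReal.ofReal (dist y z) :=
          ENNReal.ofReal_le_ofReal this
      _ = 1 * ENNReal.ofReal (dist y z) := (one_mul _).symm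
  -- a generic "limit point of near-minimizers is a zero of f" lemma
  have hzero : ∀ (w : ℕ → X) (x : X) (ψ : ℕ → ℕ), StrictMono ψ →
      (∀ j, w j ∈ S (φ (ψ j))) → Tendsto w atTop (𝓝 x) → f x = 0 := by
    intro w x ψ hψ hw hwx
    have h1 : Tendsto (fun j => infDist x (S (φ (ψ j)))) atTop (𝓝 (f x)) :=
      (hf x).comp hψ.tendsto_atTop
    have h2 : Tendsto (fun j => dist x (w j)) atTop (𝓝 0) := by
      have := tendsto_iff_dist_tendsto_zero.1 hwx
      simpa [dist_comm] using this
    have h3 : Tendsto (fun j => infDist x (S (φ (ψ j)))) atTop (𝓝 0) :=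
      squeeze_zero (fun j => infDist_nonneg)
        (fun j => infDist_le_dist_of_mem (hw j)) h2
    exact tendsto_nhds_unique h1 h3
  -- the limit set
  set S' : Set X := {x | f x = 0} with hS'def
  have hS'cl : IsClosed S' := isClosed_eq hfcont continuous_const
  -- S' is nonempty
  have hS'ne : S'.Nonempty := by
    have hz : ∀ n, ∃ z ∈ S n, dist x₀ z < C + 1 := by
      intro n
      have : infDist x₀ (S n) < C + 1 := lt_of_le_of_lt (hC n) (by linarith)
      exact (infDist_lt_iff (hne n)).1 this
    choose z hz1 hz2 using hz
    have hmem : ∀ k, z (φ k) ∈ closedBall x₀ (C + 1) := by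
      intro k
      rw [mem_closedBall, dist_comm]
      exact le_of_lt (hz2 (φ k))
    obtain ⟨x, -, ψ, hψ, hxψ⟩ :=
      (isCompact_closedBall x₀ (C + 1)).isSeqCompact hmem
    exact ⟨x, hzero (fun j => z (φ (ψ j))) x ψ hψ (fun j => hz1 (φ (ψ j))) hxψ⟩
  -- infDist to S' equals f
  have hkey : ∀ y, infDist y S' = f y := by
    intro y
    refine le_antisymm ?_ ?_
    · -- infDist y S' ≤ f y : find a limit point of near-minimizers
      have hx : ∀ k : ℕ, ∃ x ∈ S (φ k), dist y x < infDist y (S (φ k)) + 1/(k+1) := by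
        intro k
        refine (infDist_lt_iff (hne (φ k))).1 ?_
        have : (0:ℝ) < 1/(k+1) := by positivity
        linarith
      choose x hx1 hx2 using hx
      obtain ⟨M, hM⟩ : ∃ M, ∀ k, infDist y (S (φ k)) ≤ M := by
        obtain ⟨M, hM⟩ := (hf y).bddAbove_range
        exact ⟨M, fun k => hM ⟨k, rfl⟩⟩
      have hmem : ∀ k, x k ∈ closedBall y (M + 1) := by
        intro k
        rw [mem_closedBall, dist_comm]
        have : (1:ℝ)/(k+1) ≤ 1 := by
          rw [div_le_one (by positivity)]; linarith [Nat.cast_nonneg (α := ℝ) k]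
        linarith [hx2 k, hM k]
      obtain ⟨x', -, ψ, hψ, hxψ⟩ :=
        (isCompact_closedBall y (M + 1)).isSeqCompact hmem
      have hx'0 : f x' = 0 :=
        hzero (fun j => x (ψ j)) x' ψ hψ (fun j => hx1 (ψ j)) hxψ
      have hdy : dist y x' ≤ f y := by
        have h1 : Tendsto (fun j => dist y (x (ψ j))) atTop (𝓝 (dist y x')) :=
          (continuous_dist.comp (Continuous.prodMk continuous_const
            continuous_id)).continuousAt.tendsto.comp hxψ
        have h2 : Tendsto (fun j => infDist y (S (φ (ψ j))) + 1/((ψ j : ℝ)+1))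
            atTop (𝓝 (f y + 0)) := by
          refine Tendsto.add ((hf y).comp hψ.tendsto_atTop) ?_
          have : Tendsto (fun j : ℕ => ((ψ j : ℝ) + 1)) atTop atTop := by
            apply tendsto_atTop_add_const_right
            exact tendsto_natCast_atTop_atTop.comp hψ.tendsto_atTop
          simpa [Pi.inv_def] using this.inv_tendsto_atTop
        have h3 : ∀ j, dist y (x (ψ j)) ≤ infDist y (S (φ (ψ j))) + 1/((ψ j : ℝ)+1) :=
          fun j => le_of_lt (hx2 (ψ j))
        have := le_of_tendsto_of_tendsto' h1 h2 h3
        simpa using this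
      exact le_trans (infDist_le_dist_of_mem hx'0) hdy
    · -- f y ≤ infDist y S'
      by_contra h
      push_neg at h
      obtain ⟨x, hxS, hxd⟩ := (infDist_lt_iff hS'ne).1 h
      have : f y ≤ dist y x := by
        have := hfle y x
        have hx0 : f x = 0 := hxS
        rw [hx0] at this; linarith
      linarith
  exact ⟨φ, hφ, S', hS'ne, hS'cl, fun y => by rw [hkey y]; exact hf y⟩
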